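/- Let α_{ij} (1 ≤ i,j ≤ 3) and α₁, α₂, α₃, w₁, w₂ be real numbers with w₁ + w₂ = 1 and w₂ ≠ 0, and let a, b, c : ℕ → ℝ satisfy a_x = α₁₁·a_{x-1} + α₁₂·b_{x-1} + α₁₃·c_{x-1} + α₁, b_x = α₂₁·a_{x-1} + α₂₂·b_{x-1} + α₂₃·c_{x-1} + α₂, c_x = α₃₁·a_{x-1} + α₃₂·b_{x-1} + α₃₃·c_{x-1} + α₃ for all x ≥ 1. Assume α₁₁ + α₁₂ + α₁₃ = α₂₁ + α₂₂ + α₂₃ = α₃₁ + α₃₂ + α₃₃ and b_x = w₁·a_x + w₂·c_x for all x. Set C₁ = α₁₁ + α₁₂ + α₁₃, C₂ = α₁₂ + (1/w₂)·α₁₃, C₄ = α₁₂ + (1/w₂)·α₁₃ + α₂₁ − (w₁/w₂)·α₂₃, C₅ = α₂₁ − (w₁/w₂)·α₂₃. If C₄ = 0 and C₁ = 1, then for all x ≥ 1: a_x = C₁^{x-1}·(C₁·a₀ + C₂·(b₀ − a₀)·x) + α₁·x + C₂·(α₂ − α₁)·x·(x − 1)/2; b_x = C₁^{x-1}·(C₁·b₀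 + C₅·(a₀ − b₀)·x) + α₂·x + C₅·(α₁ − α₂)·x·(x − 1)/2; and c_x = −(w₁/w₂)·a_x + (1/w₂)·b_x. -/

import Mathlib

/-- Case 5 of the explicit solution of the order-three matrix recurrence with equal row
sums and `b = w₁·a + w₂·c`: here `C₄ = 0` and `C₁ = 1`. -/
theorem three_recurrences_case5 (α11 α12 α13 α21 α22 α23 α31 α32 α33 α1 α2 α3 w1 w2 : ℝ)
    (hw : w1 + w2 = 1) (hw2 : w2 ≠ 0) (a b c : ℕ → ℝ)
    (ha : ∀ x, 1 ≤ x → a x = α11 * a (x - 1) + α12 * b (x - 1) + α13 * c (x - 1) + α1)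
    (hb : ∀ x, 1 ≤ x → b x = α21 * a (x - 1) + α22 * b (x - 1) + α23 * c (x - 1) + α2)
    (hc : ∀ x, 1 ≤ x → c x = α31 * a (x - 1) + α32 * b (x - 1) + α33 * c (x - 1) + α3)
    (hrow1 : α11 + α12 + α13 = α21 + α22 + α23)
    (hrow2 : α21 + α22 + α23 = α31 + α32 + α33)
    (hcomb : ∀ x, b x = w1 * a x + w2 * c x)
    (C1 C2 C4 C5 : ℝ)
    (hC1 : C1 = α11 + α12 + α13)
    (hC2 : C2 = α12 + (1 / w2) * α13)
    (hC4 : C4 = α12 + (1 / w2) * α13 + α21 - (w1 / w2) * α23)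
    (hC5 : C5 = α21 - (w1 / w2) * α23)
    (h1 : C4 = 0) (h2 : C1 = 1) :
    ∀ x : ℕ, 1 ≤ x →
      a x = C1 ^ (x - 1) * (C1 * a 0 + C2 * (b 0 - a 0) * x)
          + α1 * x + C2 * (α2 - α1) * ((x : ℝ) * ((x : ℝ) - 1) / 2) ∧
      b x = C1 ^ (x - 1) * (C1 * b 0 + C5 * (a 0 - b 0) * x)
          + α2 * x + C5 * (α1 - α2) * ((x : ℝ) * ((x : ℝ) - 1) / 2) ∧
      c x = -(w1 / w2) * a x + (1 / w2) * b x := by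

  -- c in terms of a, b
  have hcv : ∀ y, c y = -(w1 / w2) * a y + (1 / w2) * b y := by
    intro y
    have h := hcomb y
    field_simp
    linear_combination (-1) * h
  have hw1 : w1 = 1 - w2 := by linarith
  have hC45 : C5 = -C2 := by
    have : C4 = C2 + C5 := by rw [hC4, hC2, hC5]; ring
    rw [h1] at this; linarith
  -- reduced order-two recurrences
  have hared : ∀ x : ℕ, a (x + 1) = (C1 - C2) * a x + C2 * b x + α1 := by
    intro x
    have h := ha (x + 1) (by omega)
    rw [Nat.add_sub_cancel] at h
    rw [h, hcv x, hC1, hC2, hw1]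
    field_simp
    ring
  have hbred : ∀ x : ℕ, b (x + 1) = C5 * a x + (C1 - C5) * b x + α2 := by
    intro x
    have h := hb (x + 1) (by omega)
    rw [Nat.add_sub_cancel] at h
    rw [h, hcv x, hC5, hw1]
    have hC1' : C1 = α21 + α22 + α23 := by rw [hC1, hrow1]
    rw [hC1']
    field_simp
    ring
  -- main induction
  have key : ∀ n : ℕ,
      a n = a 0 + C2 * (b 0 - a 0) * n + α1 * n + C2 * (α2 - α1) * ((n : ℝ) * ((n : ℝ) - 1) / 2) ∧
      b n = b 0 + C5 * (a 0 - b 0) * n + α2 * n + C5 * (α1 - α2) * ((n : ℝ) * ((n : ℝ) - 1) / 2) := by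
    intro n
    induction n with
    | zero => norm_num
    | succ n ih =>
      obtain ⟨iha, ihb⟩ := ih
      constructor
      · rw [hared n, iha, ihb, h2, hC45]
        push_cast
        ring
      · rw [hbred n, iha, ihb, h2, hC45]
        push_cast
        ring
  intro x hx
  obtain ⟨ka, kb⟩ := key x
  refine ⟨?_, ?_, hcv x⟩
  · rw [ka, h2, one_pow]; ring
  · rw [kb, h2, one_pow]; ring
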